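/- Let T > 0 and define u : (−∞,T) × ℝ → ℝ by u(t,x) = −(2/3)·(x/(T−t) − 1). Then u is a classical solution of the Fornberg–Whitham equation on (0,T) × ℝ: for all 0 < t < T and all x ∈ ℝ, ∂ₜu − ∂ₜ∂ₓ²u − ∂ₓu + (3/2)·u·∂ₓu − (3/2)·u·∂ₓ³u − (9/2)·∂ₓu·∂ₓ²u = 0. -/

import Mathlib

/-- Partial derivative in the first (time) variable of a curried function. -/
noncomputable def partialT (u : ℝ → ℝ → ℝ) (t x : ℝ) : ℝ := deriv (fun s => u s x) t

/-- Partial derivative in the second (space) variable of a curried function. -/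
noncomputable def partialX (u : ℝ → ℝ → ℝ) (t x : ℝ) : ℝ := deriv (fun y => u t y) x

/-- `u(t,x) = -(2/3)(x/(T-t) - 1)` is a classical solution of the Fornberg–Whitham equation
`u_t - u_{txx} - u_x + (3/2) u u_x - (3/2) u u_{xxx} - (9/2) u_x u_{xx} = 0` on `(0,T) × ℝ`. -/
theorem selfSimilar_solves_fornbergWhitham
    (T : ℝ) (hT : 0 < T) (u : ℝ → ℝ → ℝ)
    (hu : ∀ t x : ℝ, u t x = -(2 / 3) * (x / (T - t) - 1)) :
    ∀ t x : ℝ, 0 < t → t < T →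
      partialT u t x - partialT (partialX (partialX u)) t x
        - partialX u t x + (3 / 2) * u t x * partialX u t x
        - (3 / 2) * u t x * partialX (partialX (partialX u)) t x
        - (9 / 2) * partialX u t x * partialX (partialX u) t x = 0 := by
  -- first x-derivative, valid for ALL t (junk values work out when T - t = 0)
  have hux : ∀ t x : ℝ, partialX u t x = -(2 / 3) / (T - t) := by
    intro t x
    have hfun : (fun y => u t y) = fun y => -(2 / 3) * (y / (T - t) - 1) := by
      funext y; exact hu t y
    unfold partialX
    rw [hfun]
    by_cases h : T - t = 0
    · simp [h]
    · have : HasDerivAt (fun y : ℝ => -(2 / 3) * (y / (T - t) - 1))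
          (-(2 / 3) * (1 / (T - t))) x := by
        have h1 : HasDerivAt (fun y : ℝ => y / (T - t)) (1 / (T - t)) x := by
          simpa using (hasDerivAt_id x).div_const (T - t)
        simpa using ((h1.sub_const 1).const_mul (-(2 / 3) : ℝ))
      rw [this.deriv]; ring
  -- second x-derivative is 0 everywhere
  have huxx : ∀ t x : ℝ, partialX (partialX u) t x = 0 := by
    intro t x
    have hfun : (fun y => partialX u t y) = fun _ => -(2 / 3) / (T - t) := by
      funext y; exact hux t y
    show deriv (fun y => partialX u t y) x = 0
    rw [hfun, deriv_const]
  have huxxx : ∀ t x : ℝ, partialX (partialX (partialX u)) t x = 0 := by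
    intro t x
    have hfun : (fun y => partialX (partialX u) t y) = fun _ => (0 : ℝ) := by
      funext y; exact huxx t y
    show deriv (fun y => partialX (partialX u) t y) x = 0
    rw [hfun, deriv_const]
  have htxx : ∀ t x : ℝ, partialT (partialX (partialX u)) t x = 0 := by
    intro t x
    have hfun : (fun s => partialX (partialX u) s x) = fun _ => (0 : ℝ) := by
      funext s; exact huxx s x
    show deriv (fun s => partialX (partialX u) s x) t = 0
    rw [hfun, deriv_const]
  intro t x ht0 htT
  have hne : T - t ≠ 0 := sub_ne_zero.mpr (ne_of_gt htT)
  -- time derivative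
  have hut : partialT u t x = -(2 / 3) * (x / (T - t) ^ 2) := by
    have hfun : (fun s => u s x) = fun s => -(2 / 3) * (x * (T - s)⁻¹ - 1) := by
      funext s; rw [hu s x]; ring
    unfold partialT
    rw [hfun]
    have h1 : HasDerivAt (fun s : ℝ => T - s) (-1) t := by
      simpa using (hasDerivAt_id' t).const_sub T
    have h2 : HasDerivAt (fun s : ℝ => (T - s)⁻¹) (1 / (T - t) ^ 2) t := by
      have := h1.inv hne
      exact this.congr_deriv (by ring)
    have h3 : HasDerivAt (fun s : ℝ => -(2 / 3) * (x * (T - s)⁻¹ - 1))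
        (-(2 / 3) * (x * (1 / (T - t) ^ 2))) t := by
      simpa using (((h2.const_mul x).sub_const 1).const_mul (-(2 / 3) : ℝ))
    rw [h3.deriv]; ring
  rw [hut, htxx, huxxx, huxx, hux, hu]
  field_simp
  ring
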